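/- In the injectivity argument for the insertion map: let F, P be finite subsets of a group G acting on X, suppose R_0 = min{d(o, f p f^{−1} o) : f ∈ F, p ∈ P} > 8r, and let A be a set of shortest H-coset representatives. If a_1, a_1' ∈ A with d(o, a_1'o) ≥ d(o, a_1 o) and there are points on a geodesic [o, a_1'o] within distance 2r of both a_1 o and a_1 f_1 p_1 f_1^{−1} o, where a_1 f_1 p_1 f_1^{−1} a_1^{−1} = h_1 ∈ H ∖ {1}, then d(o, a_1 o) + d(a_1 o, h_1^{−1} a_1' o) ≤ d(o, a_1' o) + 8r − R_0 < d(o, a_1' o); this contradicts minimality of a_1' as a coset representative, since d(o, H a_1' o) = d(o, a_1' o). -/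

import Mathlib

/-- A parametrized geodesic from `x` to `y`. -/
structure GeodesicFrom {X : Type} [MetricSpace X] (x y : X) where
  toFun : ℝ → X
  source : toFun 0 = x
  target : toFun (dist x y) = y
  isom : ∀ s ∈ Set.Icc (0 : ℝ) (dist x y), ∀ t ∈ Set.Icc (0 : ℝ) (dist x y),
    dist (toFun s) (toFun t) = |s - t|

/-- injectivity argument via fellow travelling. Suppose
`R₀ ≤ d(o, f₁p₁f₁⁻¹ o)`, `8r < R₀`, `h₁ = a₁f₁p₁f₁⁻¹a₁⁻¹ ∈ H`, `d(o,a₁o) ≤ d(o,a₁'o)`,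
and a geodesic `[o, a₁'o]` passes (in order) within `2r` of both `a₁o` and `a₁f₁p₁f₁⁻¹o`.
Then `d(o,a₁o) + d(a₁o, h₁⁻¹a₁'o) ≤ d(o,a₁'o) + 8r − R₀ < d(o,a₁'o)`, contradicting the
minimality of `a₁'` in its coset `Ha₁'`. -/
theorem stmt18 {G X : Type} [Group G] [MetricSpace X] [MulAction G X] [IsIsometricSMul G X]
    (o : X) (H : Subgroup G) (r R0 : ℝ) (hr : 0 ≤ r) (hR0 : 8 * r < R0)
    (a1 a1' f1 p1 : G)
    (hR0le : R0 ≤ dist o ((f1 * p1 * f1⁻¹) • o))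
    (hmem : a1 * f1 * p1 * f1⁻¹ * a1⁻¹ ∈ H)
    (hne : a1 * f1 * p1 * f1⁻¹ * a1⁻¹ ≠ 1)
    (hord : dist o (a1 • o) ≤ dist o (a1' • o))
    (γ : GeodesicFrom o (a1' • o)) (s t : ℝ)
    (hs : s ∈ Set.Icc 0 (dist o (a1' • o))) (ht : t ∈ Set.Icc 0 (dist o (a1' • o)))
    (hst : s ≤ t)
    (hclose1 : dist (γ.toFun s) (a1 • o) ≤ 2 * r)
    (hclose2 : dist (γ.toFun t) ((a1 * f1 * p1 * f1⁻¹) • o) ≤ 2 * r)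
    (hmin : ∀ h ∈ H, dist o (a1' • o) ≤ dist o ((h * a1') • o)) :
    (dist o (a1 • o) +
        dist (a1 • o) (((a1 * f1 * p1 * f1⁻¹ * a1⁻¹)⁻¹ * a1') • o) ≤
      dist o (a1' • o) + 8 * r - R0) ∧ False := by
  obtain ⟨hs0, hsD⟩ := hs
  obtain ⟨ht0, htD⟩ := ht
  set D := dist o (a1' • o) with hD
  have hsdist : dist o (γ.toFun s) = s := by
    have h := γ.isom 0 ⟨le_refl 0, dist_nonneg⟩ s ⟨hs0, hsD⟩
    rw [γ.source] at h
    rw [h, abs_of_nonpos (by linarith)]; ring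
  have htdist : dist (γ.toFun t) (a1' • o) = D - t := by
    have h := γ.isom t ⟨ht0, htD⟩ D ⟨dist_nonneg, le_refl _⟩
    rw [γ.target] at h
    rw [h, abs_of_nonpos (by linarith)]; ring
  have hstdist : dist (γ.toFun s) (γ.toFun t) = t - s := by
    have h := γ.isom s ⟨hs0, hsD⟩ t ⟨ht0, htD⟩
    rw [h, abs_of_nonpos (by linarith)]; ring
  have h1 : dist o (a1 • o) ≤ s + 2 * r := by
    calc dist o (a1 • o) ≤ dist o (γ.toFun s) + dist (γ.toFun s) (a1 • o) :=
          dist_triangle _ _ _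
      _ ≤ s + 2 * r := by rw [hsdist]; linarith
  have hkey : dist (a1 • o) ((a1 * f1 * p1 * f1⁻¹) • o) = dist o ((f1 * p1 * f1⁻¹) • o) := by
    have he : (a1 * f1 * p1 * f1⁻¹) • o = a1 • ((f1 * p1 * f1⁻¹) • o) := by
      rw [← mul_smul]; congr 1; group
    rw [he, dist_smul]
  have hts : R0 - 4 * r ≤ t - s := by
    have := dist_triangle4 (a1 • o) (γ.toFun s) (γ.toFun t)
      ((a1 * f1 * p1 * f1⁻¹) • o)
    rw [dist_comm (a1 • o) (γ.toFun s), hstdist] at this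
    rw [hkey] at this
    linarith
  have h2 : dist (a1 • o) (((a1 * f1 * p1 * f1⁻¹ * a1⁻¹)⁻¹ * a1') • o)
      = dist ((a1 * f1 * p1 * f1⁻¹) • o) (a1' • o) := by
    have he1 : (a1 * f1 * p1 * f1⁻¹) • o
        = (a1 * f1 * p1 * f1⁻¹ * a1⁻¹) • (a1 • o) := by
      rw [← mul_smul]; congr 1; group
    have he2 : a1' • o
        = (a1 * f1 * p1 * f1⁻¹ * a1⁻¹) • (((a1 * f1 * p1 * f1⁻¹ * a1⁻¹)⁻¹ * a1') • o) := by
      rw [← mul_smul]; group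
    rw [he1, he2, dist_smul]
  have h3 : dist (a1 • o) (((a1 * f1 * p1 * f1⁻¹ * a1⁻¹)⁻¹ * a1') • o) ≤ 2 * r + (D - t) := by
    rw [h2]
    calc dist ((a1 * f1 * p1 * f1⁻¹) • o) (a1' • o)
        ≤ dist ((a1 * f1 * p1 * f1⁻¹) • o) (γ.toFun t) + dist (γ.toFun t) (a1' • o) :=
          dist_triangle _ _ _
      _ ≤ 2 * r + (D - t) := by rw [htdist, dist_comm]; linarith
  have hmain : dist o (a1 • o) +
      dist (a1 • o) (((a1 * f1 * p1 * f1⁻¹ * a1⁻¹)⁻¹ * a1') • o) ≤ D + 8 * r - R0 := by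
    linarith
  refine ⟨hmain, ?_⟩
  have hinv : (a1 * f1 * p1 * f1⁻¹ * a1⁻¹)⁻¹ ∈ H := inv_mem hmem
  have hlow := hmin _ hinv
  have : dist o (((a1 * f1 * p1 * f1⁻¹ * a1⁻¹)⁻¹ * a1') • o)
      ≤ dist o (a1 • o) + dist (a1 • o) (((a1 * f1 * p1 * f1⁻¹ * a1⁻¹)⁻¹ * a1') • o) :=
    dist_triangle _ _ _
  linarith
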